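/- Let γ₁, γ₂ ∈ (-1, -1/2) with γ₁ + γ₂ > -3/2, let A ∈ ℝ, and define g(x,y) = (A/2)·(x₊^{γ₁} y₊^{γ₂} + x₊^{γ₂} y₊^{γ₁}). Then the function f(x₁,x₂) = ∫₀¹ g(s - x₁, s - x₂) ds is square integrable on ℝ²: ∫_{ℝ²} f(x₁,x₂)² dx₁dx₂ < ∞. -/

import Mathlib

open MeasureTheory Set Real


open MeasureTheory

/-- The generalized Rosenblatt kernel
`g(x,y) = (A/2) (x₊^{γ₁} y₊^{γ₂} + x₊^{γ₂} y₊^{γ₁})`. -/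
noncomputable def genRosenblattKernel (A γ₁ γ₂ : ℝ) (x y : ℝ) : ℝ :=
  A / 2 * ((max x 0) ^ γ₁ * (max y 0) ^ γ₂ + (max x 0) ^ γ₂ * (max y 0) ^ γ₁)


private lemma preimage_sub_left (s a b : ℝ) :
    (fun x => s - x) ⁻¹' (Set.Ioc a b) = Set.Ico (s - b) (s - a) := by
  ext x
  simp only [Set.mem_preimage, Set.mem_Ioc, Set.mem_Ico]
  constructor <;> intro h <;> constructor <;> linarith [h.1, h.2]

private lemma preimage_sub_left_Ioi (s a : ℝ) :
    (fun x => s - x) ⁻¹' (Set.Ioi a) = Set.Iio (s - a) := by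
  ext x
  simp only [Set.mem_preimage, Set.mem_Ioi, Set.mem_Iio]
  constructor <;> intro h <;> linarith

private lemma setLIntegral_sub_left (s : ℝ) (g : ℝ → ENNReal) (T : Set ℝ) :
    ∫⁻ x in (fun x => s - x) ⁻¹' T, g (s - x) = ∫⁻ y in T, g y := by
  exact (Measure.measurePreserving_sub_left volume s).setLIntegral_comp_preimage_emb
    (MeasurableEquiv.subLeft s).measurableEmbedding g T

/-- lintegral of `u^γ` over `Ioc 0 r`. -/
private lemma lint_Ioc_rpow {γ : ℝ} (hγ : -1 < γ) {r : ℝ} (hr : 0 < r) :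
    ∫⁻ u in Set.Ioc 0 r, ENNReal.ofReal (u ^ γ) = ENNReal.ofReal (r ^ (γ + 1) / (γ + 1)) := by
  rw [← ofReal_integral_eq_lintegral_ofReal]
  · congr 1
    rw [← intervalIntegral.integral_of_le hr.le, integral_rpow (Or.inl hγ),
      Real.zero_rpow (by linarith), sub_zero]
  · exact (intervalIntegrable_iff_integrableOn_Ioc_of_le hr.le).mp (intervalIntegral.intervalIntegrable_rpow' hγ)
  · exact ae_restrict_of_forall_mem measurableSet_Ioc fun u hu => Real.rpow_nonneg hu.1.le γ

private lemma lint_Ioi_rpow {γ : ℝ} (hγ : γ < -1) {r : ℝ} (hr : 0 < r) :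
    ∫⁻ u in Set.Ioi r, ENNReal.ofReal (u ^ γ) = ENNReal.ofReal (-r ^ (γ + 1) / (γ + 1)) := by
  rw [← ofReal_integral_eq_lintegral_ofReal]
  · rw [integral_Ioi_rpow_of_lt hγ hr]
  · exact integrableOn_Ioi_rpow_of_lt hγ hr
  · exact ae_restrict_of_forall_mem measurableSet_Ioi fun u hu =>
      Real.rpow_nonneg (le_of_lt (lt_trans hr hu)) γ

private lemma key1' {γ γ' : ℝ} (hγ : -1 < γ) (hγ0 : γ < 0) (hγ'0 : γ' < 0) (hsum : γ + γ' < -1)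
    {s t : ℝ} (hst : s < t) :
    ∫⁻ x : ℝ, ENNReal.ofReal ((max (s - x) 0) ^ γ * (max (t - x) 0) ^ γ') ≤
      ENNReal.ofReal ((t - s) ^ (γ + γ' + 1)) *
        (ENNReal.ofReal (1 / (γ + 1)) + ENNReal.ofReal (-1 / (γ + γ' + 1))) := by
  set r := t - s with hr_def
  have hr : 0 < r := by simp [hr_def]; linarith
  set F : ℝ → ENNReal := fun x => ENNReal.ofReal ((max (s - x) 0) ^ γ * (max (t - x) 0) ^ γ')
    with hF
  -- integral vanishes on [s, ∞)
  have h0 : ∫⁻ x in (Set.Iio s)ᶜ, F x = 0 := by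
    rw [← lintegral_zero (μ := volume.restrict (Set.Iio s)ᶜ)]
    apply setLIntegral_congr_fun measurableSet_Iio.compl
    intro x hx
    have hx' : s ≤ x := by simpa [Set.mem_compl_iff, Set.mem_Iio, not_lt] using hx
    simp [hF, max_eq_right (by linarith : s - x ≤ 0), Real.zero_rpow (ne_of_lt hγ0), hr]
  have hsplit : ∫⁻ x, F x = ∫⁻ x in Set.Iio s, F x := by
    rw [← lintegral_add_compl F measurableSet_Iio, h0, add_zero]
  rw [hsplit]
  have hunion : Set.Iio s = Set.Iio (s - r) ∪ Set.Ico (s - r) s := by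
    rw [Set.Iio_union_Ico_eq_Iio (by linarith)]
  have hdisj : Disjoint (Set.Iio (s - r)) (Set.Ico (s - r) s) :=
    Set.disjoint_left.mpr fun x hx hx2 => absurd hx2.1 (not_le.mpr hx)
  rw [hunion, lintegral_union measurableSet_Ico hdisj]
  -- Part B : tail
  have hB : ∫⁻ x in Set.Iio (s - r), F x ≤ ENNReal.ofReal (-r ^ (γ + γ' + 1) / (γ + γ' + 1)) := by
    have hb : ∀ x ∈ Set.Iio (s - r), F x ≤ ENNReal.ofReal ((s - x) ^ (γ + γ')) := by
      intro x hx
      have hx' : r < s - x := by simp only [Set.mem_Iio] at hx; linarith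
      have h1 : 0 < s - x := lt_trans hr hx'
      have h2 : s - x < t - x := by linarith
      rw [hF]
      apply ENNReal.ofReal_le_ofReal
      rw [max_eq_left h1.le, max_eq_left (by linarith : (0:ℝ) ≤ t - x),
        Real.rpow_add h1 γ γ']
      exact mul_le_mul_of_nonneg_left (Real.rpow_le_rpow_of_nonpos h1 h2.le hγ'0.le)
        (Real.rpow_nonneg h1.le γ)
    calc ∫⁻ x in Set.Iio (s - r), F x
        ≤ ∫⁻ x in Set.Iio (s - r), ENNReal.ofReal ((s - x) ^ (γ + γ')) :=
          setLIntegral_mono' measurableSet_Iio hb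
      _ = ∫⁻ u in Set.Ioi r, ENNReal.ofReal (u ^ (γ + γ')) := by
          rw [← preimage_sub_left_Ioi s r, setLIntegral_sub_left s
            (fun u => ENNReal.ofReal (u ^ (γ + γ'))) (Set.Ioi r)]
      _ = ENNReal.ofReal (-r ^ (γ + γ' + 1) / (γ + γ' + 1)) := lint_Ioi_rpow hsum hr
  -- Part A : near part
  have hA : ∫⁻ x in Set.Ico (s - r) s, F x ≤
      ENNReal.ofReal (r ^ γ' * (r ^ (γ + 1) / (γ + 1))) := by
    have ha : ∀ x ∈ Set.Ico (s - r) s, F x ≤ ENNReal.ofReal (r ^ γ' * (s - x) ^ γ) := by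
      intro x hx
      obtain ⟨hx1, hx2⟩ := hx
      have h1 : 0 ≤ s - x := by linarith
      have h2 : r ≤ t - x := by simp only [hr_def]; linarith
      rw [hF]
      apply ENNReal.ofReal_le_ofReal
      rw [max_eq_left h1, max_eq_left (by linarith : (0:ℝ) ≤ t - x), mul_comm]
      exact mul_le_mul_of_nonneg_right (Real.rpow_le_rpow_of_nonpos hr h2 hγ'0.le)
        (Real.rpow_nonneg h1 γ)
    calc ∫⁻ x in Set.Ico (s - r) s, F x
        ≤ ∫⁻ x in Set.Ico (s - r) s, ENNReal.ofReal (r ^ γ' * (s - x) ^ γ) :=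
          setLIntegral_mono' measurableSet_Ico ha
      _ = ENNReal.ofReal (r ^ γ') * ∫⁻ x in Set.Ico (s - r) s, ENNReal.ofReal ((s - x) ^ γ) := by
          rw [← lintegral_const_mul' _ _ ENNReal.ofReal_ne_top]
          congr 1
          ext x
          rw [ENNReal.ofReal_mul (Real.rpow_nonneg hr.le γ')]
      _ = ENNReal.ofReal (r ^ γ') * ∫⁻ u in Set.Ioc 0 r, ENNReal.ofReal (u ^ γ) := by
          congr 1
          have : Set.Ico (s - r) s = (fun x => s - x) ⁻¹' (Set.Ioc 0 r) := by
            rw [preimage_sub_left, sub_zero]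
          rw [this, setLIntegral_sub_left s (fun u => ENNReal.ofReal (u ^ γ)) (Set.Ioc 0 r)]
      _ = ENNReal.ofReal (r ^ γ' * (r ^ (γ + 1) / (γ + 1))) := by
          rw [lint_Ioc_rpow hγ hr, ← ENNReal.ofReal_mul (Real.rpow_nonneg hr.le γ')]
  calc (∫⁻ x in Set.Iio (s - r), F x) + ∫⁻ x in Set.Ico (s - r) s, F x
      ≤ ENNReal.ofReal (-r ^ (γ + γ' + 1) / (γ + γ' + 1)) +
        ENNReal.ofReal (r ^ γ' * (r ^ (γ + 1) / (γ + 1))) := add_le_add hB hA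
    _ = ENNReal.ofReal (r ^ (γ + γ' + 1)) *
        (ENNReal.ofReal (1 / (γ + 1)) + ENNReal.ofReal (-1 / (γ + γ' + 1))) := by
        rw [mul_add, ← ENNReal.ofReal_mul (Real.rpow_nonneg (by linarith) _),
          ← ENNReal.ofReal_mul (Real.rpow_nonneg (by linarith) _)]
        rw [add_comm]
        congr 1
        · congr 1
          rw [div_eq_mul_inv, ← mul_assoc, ← Real.rpow_add hr,
            show γ' + (γ + 1) = γ + γ' + 1 by ring, one_div]
        · congr 1
          ring


noncomputable def Phi0 (γ s x : ℝ) : ENNReal := ENNReal.ofReal ((max (s - x) 0) ^ γ)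

noncomputable def C0 (γ γ' : ℝ) : ENNReal :=
  ENNReal.ofReal (1 / (γ + 1)) + ENNReal.ofReal (1 / (γ' + 1)) +
    ENNReal.ofReal (-1 / (γ + γ' + 1))

lemma C0_ne_top (γ γ' : ℝ) : C0 γ γ' ≠ ⊤ := by
  simp [C0, ENNReal.add_ne_top, ENNReal.ofReal_ne_top]

lemma Phi0_ne_top (γ s x : ℝ) : Phi0 γ s x ≠ ⊤ := ENNReal.ofReal_ne_top

lemma measurable_Phi0 (γ : ℝ) : Measurable fun q : ℝ × ℝ => Phi0 γ q.1 q.2 :=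
  (((measurable_fst.sub measurable_snd).max measurable_const).pow_const γ).ennreal_ofReal

lemma Phi0_mul (γ γ' s t x : ℝ) :
    Phi0 γ s x * Phi0 γ' t x =
      ENNReal.ofReal ((max (s - x) 0) ^ γ * (max (t - x) 0) ^ γ') := by
  rw [Phi0, Phi0, ← ENNReal.ofReal_mul (Real.rpow_nonneg (le_max_right _ _) γ)]

lemma key2 {γ γ' : ℝ} (hγ : γ ∈ Set.Ioo (-1 : ℝ) (-1/2)) (hγ' : γ' ∈ Set.Ioo (-1 : ℝ) (-1/2))
    {s t : ℝ} (hst : s ≠ t) :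
    ∫⁻ x : ℝ, Phi0 γ s x * Phi0 γ' t x ≤
      ENNReal.ofReal (|s - t| ^ (γ + γ' + 1)) * C0 γ γ' := by
  obtain ⟨hγ1, hγ2⟩ := hγ
  obtain ⟨hγ'1, hγ'2⟩ := hγ'
  have hsum : γ + γ' < -1 := by linarith
  simp only [Phi0_mul]
  rcases lt_or_gt_of_ne hst with h | h
  · have habs : |s - t| = t - s := by rw [abs_sub_comm]; exact abs_of_pos (by linarith)
    rw [habs]
    refine le_trans (key1' hγ1 (by linarith) (by linarith) hsum h) ?_
    rw [C0]
    gcongr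
    exact le_add_of_nonneg_right zero_le
  · have habs : |s - t| = s - t := abs_of_pos (by linarith)
    calc ∫⁻ x, ENNReal.ofReal ((max (s - x) 0) ^ γ * (max (t - x) 0) ^ γ')
        = ∫⁻ x, ENNReal.ofReal ((max (t - x) 0) ^ γ' * (max (s - x) 0) ^ γ) := by
          apply lintegral_congr; intro x; rw [mul_comm]
      _ ≤ ENNReal.ofReal ((s - t) ^ (γ' + γ + 1)) *
            (ENNReal.ofReal (1 / (γ' + 1)) + ENNReal.ofReal (-1 / (γ' + γ + 1))) :=
          key1' hγ'1 (by linarith) (by linarith : γ < 0) (by linarith : γ' + γ < -1) h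
      _ ≤ ENNReal.ofReal (|s - t| ^ (γ + γ' + 1)) * C0 γ γ' := by
          rw [habs, show γ' + γ + 1 = γ + γ' + 1 by ring]
          refine mul_le_mul_right ?_ _
          rw [C0, show γ + γ' + 1 = γ' + γ + 1 by ring]
          exact add_le_add_left le_add_self _

noncomputable def Ef (γ₁ γ₂ s : ℝ) (p : ℝ × ℝ) : ENNReal :=
  Phi0 γ₁ s p.1 * Phi0 γ₂ s p.2 + Phi0 γ₂ s p.1 * Phi0 γ₁ s p.2

lemma Ef_ne_top (γ₁ γ₂ s : ℝ) (p : ℝ × ℝ) : Ef γ₁ γ₂ s p ≠ ⊤ :=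
  ENNReal.add_ne_top.mpr ⟨ENNReal.mul_ne_top (Phi0_ne_top _ _ _) (Phi0_ne_top _ _ _),
    ENNReal.mul_ne_top (Phi0_ne_top _ _ _) (Phi0_ne_top _ _ _)⟩

lemma measurable_Ef (γ₁ γ₂ : ℝ) : Measurable fun q : ℝ × (ℝ × ℝ) => Ef γ₁ γ₂ q.1 q.2 := by
  have h : ∀ γ : ℝ, Measurable fun q : ℝ × (ℝ × ℝ) => Phi0 γ q.1 q.2.1 := by
    intro γ
    unfold Phi0
    exact (((measurable_fst.sub (measurable_fst.comp measurable_snd)).max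
      measurable_const).pow_const γ).ennreal_ofReal
  have h' : ∀ γ : ℝ, Measurable fun q : ℝ × (ℝ × ℝ) => Phi0 γ q.1 q.2.2 := by
    intro γ
    unfold Phi0
    exact (((measurable_fst.sub (measurable_snd.comp measurable_snd)).max
      measurable_const).pow_const γ).ennreal_ofReal
  unfold Ef
  exact ((h γ₁).mul (h' γ₂)).add ((h γ₂).mul (h' γ₁))

lemma measurable_Phi0' (γ s : ℝ) : Measurable fun x => Phi0 γ s x := by
  unfold Phi0
  exact (((measurable_const.sub measurable_id).max measurable_const).pow_const γ).ennreal_ofReal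

lemma lint_prod_phis (a b c d s t : ℝ) :
    ∫⁻ p : ℝ × ℝ, (Phi0 a s p.1 * Phi0 b t p.1) * (Phi0 c s p.2 * Phi0 d t p.2) =
      (∫⁻ x, Phi0 a s x * Phi0 b t x) * (∫⁻ x, Phi0 c s x * Phi0 d t x) := by
  rw [show (volume : Measure (ℝ × ℝ)) = (volume : Measure ℝ).prod volume from Measure.volume_eq_prod ℝ ℝ]
  exact lintegral_prod_mul ((measurable_Phi0' a s).mul (measurable_Phi0' b t)).aemeasurable
    ((measurable_Phi0' c s).mul (measurable_Phi0' d t)).aemeasurable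

lemma piece_bound {a b c d : ℝ} (ha : a ∈ Set.Ioo (-1 : ℝ) (-1/2))
    (hb : b ∈ Set.Ioo (-1 : ℝ) (-1/2)) (hc : c ∈ Set.Ioo (-1 : ℝ) (-1/2))
    (hd : d ∈ Set.Ioo (-1 : ℝ) (-1/2)) {s t : ℝ} (hst : s ≠ t) {e : ℝ}
    (he : a + b + 1 + (c + d + 1) = e) :
    ∫⁻ p : ℝ × ℝ, (Phi0 a s p.1 * Phi0 b t p.1) * (Phi0 c s p.2 * Phi0 d t p.2) ≤
      ENNReal.ofReal (|s - t| ^ e) * (C0 a b * C0 c d) := by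
  rw [lint_prod_phis]
  have habs : 0 < |s - t| := abs_pos.mpr (sub_ne_zero.mpr hst)
  calc (∫⁻ x, Phi0 a s x * Phi0 b t x) * (∫⁻ x, Phi0 c s x * Phi0 d t x)
      ≤ (ENNReal.ofReal (|s - t| ^ (a + b + 1)) * C0 a b) *
        (ENNReal.ofReal (|s - t| ^ (c + d + 1)) * C0 c d) :=
        mul_le_mul' (key2 ha hb hst) (key2 hc hd hst)
    _ = ENNReal.ofReal (|s - t| ^ e) * (C0 a b * C0 c d) := by
        rw [mul_mul_mul_comm, ← ENNReal.ofReal_mul (Real.rpow_nonneg habs.le _),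
          ← Real.rpow_add habs, he]

noncomputable def K0 (γ₁ γ₂ : ℝ) : ENNReal :=
  C0 γ₁ γ₁ * C0 γ₂ γ₂ + C0 γ₁ γ₂ * C0 γ₂ γ₁ + C0 γ₂ γ₁ * C0 γ₁ γ₂ + C0 γ₂ γ₂ * C0 γ₁ γ₁

lemma K0_ne_top (γ₁ γ₂ : ℝ) : K0 γ₁ γ₂ ≠ ⊤ := by
  simp [K0, ENNReal.add_ne_top, ENNReal.mul_ne_top, C0_ne_top]

lemma Ef_mul_bound {γ₁ γ₂ : ℝ} (h1 : γ₁ ∈ Set.Ioo (-1 : ℝ) (-1/2))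
    (h2 : γ₂ ∈ Set.Ioo (-1 : ℝ) (-1/2)) {s t : ℝ} (hst : s ≠ t) :
    ∫⁻ p : ℝ × ℝ, Ef γ₁ γ₂ s p * Ef γ₁ γ₂ t p ≤
      ENNReal.ofReal (|s - t| ^ (2 * (γ₁ + γ₂) + 2)) * K0 γ₁ γ₂ := by
  have hexp : ∀ p : ℝ × ℝ, Ef γ₁ γ₂ s p * Ef γ₁ γ₂ t p =
      (Phi0 γ₁ s p.1 * Phi0 γ₁ t p.1) * (Phi0 γ₂ s p.2 * Phi0 γ₂ t p.2) +
      (Phi0 γ₁ s p.1 * Phi0 γ₂ t p.1) * (Phi0 γ₂ s p.2 * Phi0 γ₁ t p.2) +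
      ((Phi0 γ₂ s p.1 * Phi0 γ₁ t p.1) * (Phi0 γ₁ s p.2 * Phi0 γ₂ t p.2) +
      (Phi0 γ₂ s p.1 * Phi0 γ₂ t p.1) * (Phi0 γ₁ s p.2 * Phi0 γ₁ t p.2)) := by
    intro p; rw [Ef, Ef]; ring
  rw [lintegral_congr hexp]
  have m1 : ∀ a b c d : ℝ, Measurable fun p : ℝ × ℝ =>
      (Phi0 a s p.1 * Phi0 b t p.1) * (Phi0 c s p.2 * Phi0 d t p.2) := fun a b c d =>
    (((measurable_Phi0' a s).comp measurable_fst).mul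
      ((measurable_Phi0' b t).comp measurable_fst)).mul
    (((measurable_Phi0' c s).comp measurable_snd).mul
      ((measurable_Phi0' d t).comp measurable_snd))
  rw [lintegral_add_left ((m1 γ₁ γ₁ γ₂ γ₂).fun_add (m1 γ₁ γ₂ γ₂ γ₁)),
    lintegral_add_left (m1 γ₁ γ₁ γ₂ γ₂), lintegral_add_left (m1 γ₂ γ₁ γ₁ γ₂)]
  have e1 := piece_bound h1 h1 h2 h2 hst (by ring : γ₁ + γ₁ + 1 + (γ₂ + γ₂ + 1) = 2 * (γ₁ + γ₂) + 2)
  have e2 := piece_bound h1 h2 h2 h1 hst (by ring : γ₁ + γ₂ + 1 + (γ₂ + γ₁ + 1) = 2 * (γ₁ + γ₂) + 2)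
  have e3 := piece_bound h2 h1 h1 h2 hst (by ring : γ₂ + γ₁ + 1 + (γ₁ + γ₂ + 1) = 2 * (γ₁ + γ₂) + 2)
  have e4 := piece_bound h2 h2 h1 h1 hst (by ring : γ₂ + γ₂ + 1 + (γ₁ + γ₁ + 1) = 2 * (γ₁ + γ₂) + 2)
  calc _ ≤ ENNReal.ofReal (|s - t| ^ (2 * (γ₁ + γ₂) + 2)) * (C0 γ₁ γ₁ * C0 γ₂ γ₂) +
        ENNReal.ofReal (|s - t| ^ (2 * (γ₁ + γ₂) + 2)) * (C0 γ₁ γ₂ * C0 γ₂ γ₁) +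
        (ENNReal.ofReal (|s - t| ^ (2 * (γ₁ + γ₂) + 2)) * (C0 γ₂ γ₁ * C0 γ₁ γ₂) +
        ENNReal.ofReal (|s - t| ^ (2 * (γ₁ + γ₂) + 2)) * (C0 γ₂ γ₂ * C0 γ₁ γ₁)) :=
        add_le_add (add_le_add e1 e2) (add_le_add e3 e4)
    _ = ENNReal.ofReal (|s - t| ^ (2 * (γ₁ + γ₂) + 2)) * K0 γ₁ γ₂ := by
        rw [K0]; ring

private lemma preimage_sub_left_Ioo (s a b : ℝ) :
    (fun x => s - x) ⁻¹' (Set.Ioo a b) = Set.Ioo (s - b) (s - a) := by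
  ext x
  simp only [Set.mem_preimage, Set.mem_Ioo]
  constructor <;> intro h <;> constructor <;> linarith [h.1, h.2]

private lemma preimage_sub_left_Ico (s a b : ℝ) :
    (fun x => s - x) ⁻¹' (Set.Ico a b) = Set.Ioc (s - b) (s - a) := by
  ext x
  simp only [Set.mem_preimage, Set.mem_Ico, Set.mem_Ioc]
  constructor <;> intro h <;> constructor <;> linarith [h.1, h.2]

private lemma setLIntegral_sub_left' (s : ℝ) (g : ℝ → ENNReal) (T : Set ℝ) :
    ∫⁻ x in (fun x => s - x) ⁻¹' T, g (s - x) = ∫⁻ y in T, g y := by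
  exact (Measure.measurePreserving_sub_left volume s).setLIntegral_comp_preimage_emb
    (MeasurableEquiv.subLeft s).measurableEmbedding g T

private lemma lint_Ioc_rpow' {γ : ℝ} (hγ : -1 < γ) {r : ℝ} (hr : 0 < r) :
    ∫⁻ u in Set.Ioc 0 r, ENNReal.ofReal (u ^ γ) = ENNReal.ofReal (r ^ (γ + 1) / (γ + 1)) := by
  rw [← ofReal_integral_eq_lintegral_ofReal]
  · congr 1
    rw [← intervalIntegral.integral_of_le hr.le, integral_rpow (Or.inl hγ),
      Real.zero_rpow (by linarith), sub_zero]
  · exact (intervalIntegrable_iff_integrableOn_Ioc_of_le hr.le).mp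
      (intervalIntegral.intervalIntegrable_rpow' hγ)
  · exact ae_restrict_of_forall_mem measurableSet_Ioc fun u hu => Real.rpow_nonneg hu.1.le γ

lemma outer_bound {α : ℝ} (hα : -1 < α) : ∃ M : ENNReal, M ≠ ⊤ ∧ ∀ s ∈ Set.Ioc (0:ℝ) 1,
    ∫⁻ t in Set.Ioc (0:ℝ) 1, ENNReal.ofReal (|s - t| ^ α) ≤ M := by
  refine ⟨∫⁻ u in Set.Ioo (-1 : ℝ) 1, ENNReal.ofReal (|u| ^ α), ?_, ?_⟩
  · -- finiteness
    have hIoc : ∫⁻ u in Set.Ioc (0:ℝ) 1, ENNReal.ofReal (|u| ^ α) =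
        ENNReal.ofReal (1 ^ (α + 1) / (α + 1)) := by
      rw [← lint_Ioc_rpow' hα one_pos]
      apply setLIntegral_congr_fun measurableSet_Ioc
      exact fun u hu => by simp only [abs_of_pos hu.1]
    have hneg : ∫⁻ u in Set.Ioc (-1 : ℝ) 0, ENNReal.ofReal (|u| ^ α) ≤
        ∫⁻ u in Set.Ioc (0:ℝ) 1, ENNReal.ofReal (|u| ^ α) := by
      have h1 : ∫⁻ u in Set.Ioc (-1 : ℝ) 0, ENNReal.ofReal (|u| ^ α) =
          ∫⁻ u in Set.Ico (0:ℝ) 1, ENNReal.ofReal (|u| ^ α) := by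
        have hpre : Set.Ioc (-1 : ℝ) 0 = (fun x => (0:ℝ) - x) ⁻¹' (Set.Ico 0 1) := by
          rw [preimage_sub_left_Ico]; norm_num
        rw [hpre, ← setLIntegral_sub_left' 0 (fun u => ENNReal.ofReal (|u| ^ α)) (Set.Ico 0 1)]
        apply lintegral_congr
        intro x
        simp
      rw [h1, ← Measure.restrict_congr_set Ioo_ae_eq_Ico]
      exact lintegral_mono_set Set.Ioo_subset_Ioc_self
    have hle : ∫⁻ u in Set.Ioo (-1 : ℝ) 1, ENNReal.ofReal (|u| ^ α) ≤
        (∫⁻ u in Set.Ioc (-1 : ℝ) 0, ENNReal.ofReal (|u| ^ α)) +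
          ∫⁻ u in Set.Ioc (0:ℝ) 1, ENNReal.ofReal (|u| ^ α) := by
      refine le_trans ?_ (lintegral_union_le _ _ _)
      apply lintegral_mono_set
      intro u hu
      rcases le_or_gt u 0 with h | h
      · exact Or.inl ⟨hu.1, h⟩
      · exact Or.inr ⟨h, hu.2.le⟩
    have hfin : (∫⁻ u in Set.Ioc (-1 : ℝ) 0, ENNReal.ofReal (|u| ^ α)) +
        ∫⁻ u in Set.Ioc (0:ℝ) 1, ENNReal.ofReal (|u| ^ α) ≠ ⊤ := by
      rw [hIoc]
      exact ENNReal.add_ne_top.mpr ⟨(lt_of_le_of_lt hneg (by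
        rw [hIoc]; exact ENNReal.ofReal_lt_top)).ne, ENNReal.ofReal_ne_top⟩
    exact ne_top_of_le_ne_top hfin hle
  · intro s hs
    calc ∫⁻ t in Set.Ioc (0:ℝ) 1, ENNReal.ofReal (|s - t| ^ α)
        ≤ ∫⁻ t in Set.Ioo (s - 1) (s + 1), ENNReal.ofReal (|s - t| ^ α) := by
          apply lintegral_mono_set
          intro t ht
          exact ⟨by linarith [ht.1, hs.2], by linarith [ht.2, hs.1]⟩
      _ = ∫⁻ u in Set.Ioo (-1 : ℝ) 1, ENNReal.ofReal (|u| ^ α) := by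
          have hpre : Set.Ioo (s - 1) (s + 1) = (fun x => s - x) ⁻¹' (Set.Ioo (-1) 1) := by
            rw [preimage_sub_left_Ioo]; ring_nf
          rw [hpre, ← setLIntegral_sub_left' s (fun u => ENNReal.ofReal (|u| ^ α)) (Set.Ioo (-1) 1)]

set_option maxHeartbeats 1000000 in
lemma main_lint {γ₁ γ₂ : ℝ} (h1 : γ₁ ∈ Set.Ioo (-1:ℝ) (-1/2)) (h2 : γ₂ ∈ Set.Ioo (-1:ℝ) (-1/2))
    (hsum : γ₁ + γ₂ > -3/2) :
    ∫⁻ p : ℝ × ℝ, (∫⁻ s in Set.Ioc (0:ℝ) 1, Ef γ₁ γ₂ s p) *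
      (∫⁻ s in Set.Ioc (0:ℝ) 1, Ef γ₁ γ₂ s p) < ⊤ := by
  have hα : (-1 : ℝ) < 2 * (γ₁ + γ₂) + 2 := by linarith
  obtain ⟨M, hM, hMb⟩ := outer_bound hα
  have mEs : ∀ p : ℝ × ℝ, Measurable fun s => Ef γ₁ γ₂ s p := by
    intro p; unfold Ef Phi0; fun_prop
  have hsq : ∀ p : ℝ × ℝ, (∫⁻ s in Set.Ioc (0:ℝ) 1, Ef γ₁ γ₂ s p) *
      (∫⁻ s in Set.Ioc (0:ℝ) 1, Ef γ₁ γ₂ s p) =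
      ∫⁻ s in Set.Ioc (0:ℝ) 1, ∫⁻ t in Set.Ioc (0:ℝ) 1, Ef γ₁ γ₂ s p * Ef γ₁ γ₂ t p := by
    intro p
    rw [← lintegral_mul_const'' _ (mEs p).aemeasurable]
    apply lintegral_congr
    intro s
    exact (lintegral_const_mul' _ _ (Ef_ne_top γ₁ γ₂ s p)).symm
  rw [lintegral_congr hsq]
  have mG : Measurable fun w : ((ℝ × ℝ) × ℝ) × ℝ =>
      Ef γ₁ γ₂ w.1.2 w.1.1 * Ef γ₁ γ₂ w.2 w.1.1 := by
    unfold Ef Phi0; fun_prop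
  have hswap1 : (∫⁻ p : ℝ × ℝ, ∫⁻ s in Set.Ioc (0:ℝ) 1, ∫⁻ t in Set.Ioc (0:ℝ) 1,
      Ef γ₁ γ₂ s p * Ef γ₁ γ₂ t p) = ∫⁻ s in Set.Ioc (0:ℝ) 1, ∫⁻ p : ℝ × ℝ,
      ∫⁻ t in Set.Ioc (0:ℝ) 1, Ef γ₁ γ₂ s p * Ef γ₁ γ₂ t p :=
    lintegral_lintegral_swap (mG.lintegral_prod_right').aemeasurable
  rw [hswap1]
  have hswap2 : ∀ s : ℝ, (∫⁻ p : ℝ × ℝ, ∫⁻ t in Set.Ioc (0:ℝ) 1, Ef γ₁ γ₂ s p * Ef γ₁ γ₂ t p)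
      = ∫⁻ t in Set.Ioc (0:ℝ) 1, ∫⁻ p : ℝ × ℝ, Ef γ₁ γ₂ s p * Ef γ₁ γ₂ t p := by
    intro s
    refine lintegral_lintegral_swap ?_
    have : Measurable fun w : (ℝ × ℝ) × ℝ => Ef γ₁ γ₂ s w.1 * Ef γ₁ γ₂ w.2 w.1 := by
      unfold Ef Phi0; fun_prop
    exact this.aemeasurable
  have hs_bound : ∀ s ∈ Set.Ioc (0:ℝ) 1, (∫⁻ p : ℝ × ℝ, ∫⁻ t in Set.Ioc (0:ℝ) 1,
      Ef γ₁ γ₂ s p * Ef γ₁ γ₂ t p) ≤ M * K0 γ₁ γ₂ := by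
    intro s hs
    rw [hswap2 s]
    have hae : ∀ᵐ t ∂(volume.restrict (Set.Ioc (0:ℝ) 1)), t ≠ s := by
      refine ae_iff.mpr ?_
      have hset : {t : ℝ | ¬ t ≠ s} = {s} := by ext t; simp
      rw [hset, Measure.restrict_apply (measurableSet_singleton s)]
      exact measure_mono_null Set.inter_subset_left (Real.volume_singleton)
    calc (∫⁻ t in Set.Ioc (0:ℝ) 1, ∫⁻ p : ℝ × ℝ, Ef γ₁ γ₂ s p * Ef γ₁ γ₂ t p)
        ≤ ∫⁻ t in Set.Ioc (0:ℝ) 1,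
            ENNReal.ofReal (|s - t| ^ (2 * (γ₁ + γ₂) + 2)) * K0 γ₁ γ₂ := by
          apply lintegral_mono_ae
          filter_upwards [hae] with t ht
          exact Ef_mul_bound h1 h2 (Ne.symm ht)
      _ = (∫⁻ t in Set.Ioc (0:ℝ) 1,
            ENNReal.ofReal (|s - t| ^ (2 * (γ₁ + γ₂) + 2))) * K0 γ₁ γ₂ :=
          lintegral_mul_const'' _
            (((measurable_const.sub measurable_id).abs.pow_const _).ennreal_ofReal).aemeasurable
      _ ≤ M * K0 γ₁ γ₂ := mul_le_mul_left (hMb s hs) _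
  refine lt_of_le_of_lt (setLIntegral_mono' measurableSet_Ioc hs_bound) ?_
  rw [setLIntegral_const]
  refine ENNReal.mul_lt_top ?_ ?_
  · exact ENNReal.mul_lt_top hM.lt_top (K0_ne_top _ _).lt_top
  · simp [Real.volume_Ioc]

lemma pointwise_bound (γ₁ γ₂ A : ℝ) (p : ℝ × ℝ) :
    ENNReal.ofReal ((∫ s in (0:ℝ)..1, genRosenblattKernel A γ₁ γ₂ (s - p.1) (s - p.2)) ^ 2)
      ≤ ENNReal.ofReal ((A / 2) ^ 2) *
        ((∫⁻ s in Set.Ioc (0:ℝ) 1, Ef γ₁ γ₂ s p) * (∫⁻ s in Set.Ioc (0:ℝ) 1, Ef γ₁ γ₂ s p)) := by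
  set e : ℝ → ℝ := fun s => (max (s - p.1) 0) ^ γ₁ * (max (s - p.2) 0) ^ γ₂ +
    (max (s - p.1) 0) ^ γ₂ * (max (s - p.2) 0) ^ γ₁ with he_def
  have he_nonneg : ∀ s, 0 ≤ e s := fun s =>
    add_nonneg (mul_nonneg (Real.rpow_nonneg (le_max_right _ _) _)
        (Real.rpow_nonneg (le_max_right _ _) _))
      (mul_nonneg (Real.rpow_nonneg (le_max_right _ _) _)
        (Real.rpow_nonneg (le_max_right _ _) _))
  have hf : (∫ s in (0:ℝ)..1, genRosenblattKernel A γ₁ γ₂ (s - p.1) (s - p.2)) =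
      A / 2 * ∫ s in Set.Ioc (0:ℝ) 1, e s := by
    rw [intervalIntegral.integral_of_le zero_le_one]
    unfold genRosenblattKernel
    rw [← integral_const_mul]
  have hI : 0 ≤ ∫ s in Set.Ioc (0:ℝ) 1, e s :=
    integral_nonneg he_nonneg
  have hofe : ∀ s, ENNReal.ofReal (e s) = Ef γ₁ γ₂ s p := by
    intro s
    rw [he_def, Ef, Phi0, Phi0, Phi0, Phi0]
    rw [ENNReal.ofReal_add (mul_nonneg (Real.rpow_nonneg (le_max_right _ _) _)
        (Real.rpow_nonneg (le_max_right _ _) _))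
      (mul_nonneg (Real.rpow_nonneg (le_max_right _ _) _)
        (Real.rpow_nonneg (le_max_right _ _) _)),
      ENNReal.ofReal_mul (Real.rpow_nonneg (le_max_right _ _) _),
      ENNReal.ofReal_mul (Real.rpow_nonneg (le_max_right _ _) _)]
  have hO : ENNReal.ofReal (∫ s in Set.Ioc (0:ℝ) 1, e s) ≤
      ∫⁻ s in Set.Ioc (0:ℝ) 1, Ef γ₁ γ₂ s p := by
    by_cases hint : Integrable e (volume.restrict (Set.Ioc (0:ℝ) 1))
    · rw [ofReal_integral_eq_lintegral_ofReal hint (Filter.Eventually.of_forall he_nonneg)]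
      apply le_of_eq
      apply lintegral_congr
      intro s
      exact hofe s
    · rw [integral_undef hint]
      simp
  rw [hf, mul_pow, ENNReal.ofReal_mul (sq_nonneg (A / 2)), sq (∫ s in Set.Ioc (0:ℝ) 1, e s),
    ENNReal.ofReal_mul hI]
  exact mul_le_mul_right (mul_le_mul' hO hO) _

/-- The function `f(x₁,x₂) = ∫₀¹ g(s-x₁, s-x₂) ds` is square integrable on `ℝ²`:
`∫_{ℝ²} f(x₁,x₂)² dx₁ dx₂ < ∞`. -/
theorem genRosenblattKernel_time_integral_memL2
    (γ₁ γ₂ : ℝ) (h1 : γ₁ ∈ Set.Ioo (-1 : ℝ) (-1/2)) (h2 : γ₂ ∈ Set.Ioo (-1 : ℝ) (-1/2))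
    (hsum : γ₁ + γ₂ > -3/2) (A : ℝ) :
    Integrable
      (fun p : ℝ × ℝ =>
        (∫ s in (0 : ℝ)..1, genRosenblattKernel A γ₁ γ₂ (s - p.1) (s - p.2)) ^ 2) := by
  constructor
  · have hrepr : (fun p : ℝ × ℝ =>
        (∫ s in (0:ℝ)..1, genRosenblattKernel A γ₁ γ₂ (s - p.1) (s - p.2)) ^ 2)
        = fun p : ℝ × ℝ =>
        (∫ s in Set.Ioc (0:ℝ) 1, genRosenblattKernel A γ₁ γ₂ (s - p.1) (s - p.2)) ^ 2 := by
      funext p; rw [intervalIntegral.integral_of_le zero_le_one]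
    rw [hrepr]
    have hm : StronglyMeasurable fun q : (ℝ × ℝ) × ℝ =>
        genRosenblattKernel A γ₁ γ₂ (q.2 - q.1.1) (q.2 - q.1.2) := by
      apply Measurable.stronglyMeasurable
      unfold genRosenblattKernel
      fun_prop
    have hsm : StronglyMeasurable fun p : ℝ × ℝ =>
        ∫ s in Set.Ioc (0:ℝ) 1, genRosenblattKernel A γ₁ γ₂ (s - p.1) (s - p.2) :=
      hm.integral_prod_right'
    exact (hsm.measurable.pow_const 2).aestronglyMeasurable
  · rw [hasFiniteIntegral_iff_norm]
    calc ∫⁻ p : ℝ × ℝ, ENNReal.ofReal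
          ‖(∫ s in (0:ℝ)..1, genRosenblattKernel A γ₁ γ₂ (s - p.1) (s - p.2)) ^ 2‖
        = ∫⁻ p : ℝ × ℝ, ENNReal.ofReal
          ((∫ s in (0:ℝ)..1, genRosenblattKernel A γ₁ γ₂ (s - p.1) (s - p.2)) ^ 2) := by
          apply lintegral_congr
          intro p
          rw [Real.norm_of_nonneg (sq_nonneg _)]
      _ ≤ ∫⁻ p : ℝ × ℝ, ENNReal.ofReal ((A / 2) ^ 2) *
          ((∫⁻ s in Set.Ioc (0:ℝ) 1, Ef γ₁ γ₂ s p) *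
            (∫⁻ s in Set.Ioc (0:ℝ) 1, Ef γ₁ γ₂ s p)) :=
          lintegral_mono (pointwise_bound γ₁ γ₂ A)
      _ = ENNReal.ofReal ((A / 2) ^ 2) * ∫⁻ p : ℝ × ℝ,
          ((∫⁻ s in Set.Ioc (0:ℝ) 1, Ef γ₁ γ₂ s p) *
            (∫⁻ s in Set.Ioc (0:ℝ) 1, Ef γ₁ γ₂ s p)) :=
          lintegral_const_mul' _ _ ENNReal.ofReal_ne_top
      _ < ⊤ := ENNReal.mul_lt_top ENNReal.ofReal_lt_top (main_lint h1 h2 hsum)
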